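/- Let X ⊆ Σ^ℤ be a strongly synchronizing subshift with a characteristic pair of fixed points ((α₋)_{i∈ℤ}, (α₊)_{i∈ℤ}). Then the set Σ₋(X) of synchronizing symbols σ₋ for which 𝒟(σ₋, α₋) is nonempty is itself nonempty, and for every σ₋ ∈ Σ₋(X) the set 𝒟(σ₋, α₋) is finite. -/

import Mathlib

/-- The shift on `Σ^ℤ`: `(x_i)_{i∈ℤ} ↦ (x_{i+1})_{i∈ℤ}`. -/
def shift {A : Type*} (x : ℤ → A) : ℤ → A := fun i => x (i + 1)

/-- The word `x_{[a,b]}` carried by the block of `x` on the interval `[a, b]`. -/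
def block {A : Type*} (x : ℤ → A) (a b : ℤ) : List A :=
  (List.range (b + 1 - a).toNat).map fun k => x (a + k)

/-- A word is admissible for `X` if it appears in a point of `X`. -/
def Admissible {A : Type*} (X : Set (ℤ → A)) (w : List A) : Prop :=
  ∃ x ∈ X, ∃ n : ℤ, ∀ (k : ℕ) (h : k < w.length), x (n + k) = w.get ⟨k, h⟩

/-- A word `v` is synchronizing for `X` if it is admissible and whenever `uv` and `vw`
are admissible, so is `uvw`. -/
def IsSyncWord {A : Type*} (X : Set (ℤ → A)) (v : List A) : Prop :=
  Admissible X v ∧ ∀ u w : List A, Admissible X (u ++ v) → Admissible X (v ++ w) →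
    Admissible X (u ++ v ++ w)

/-- A subshift: a nonempty, closed, shift-invariant subset of `Σ^ℤ`. -/
def IsSubshift {A : Type*} [TopologicalSpace A] (X : Set (ℤ → A)) : Prop :=
  X.Nonempty ∧ IsClosed X ∧ shift '' X = X

/-- Topological transitivity of a subshift, expressed on its language: any two admissible
words can be joined by an admissible transition word. -/
def LangTransitive {A : Type*} (X : Set (ℤ → A)) : Prop :=
  ∀ u v : List A, Admissible X u → Admissible X v → ∃ w, Admissible X (u ++ w ++ v)

/-- A synchronizing subshift: topologically transitive with a synchronizing word. -/
def SyncSubshift {A : Type*} (X : Set (ℤ → A)) : Prop :=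
  LangTransitive X ∧ ∃ v : List A, IsSyncWord X v

/-- A strongly synchronizing subshift: synchronizing symbols appear uniformly close
(within distance `Q`) to synchronizing words. -/
def StronglySync {A : Type*} (X : Set (ℤ → A)) : Prop :=
  SyncSubshift X ∧ ∃ Q : ℕ, ∀ x ∈ X, ∀ I₁ I₂ : ℤ, I₁ ≤ I₂ →
    IsSyncWord X (block x I₁ I₂) →
    ∃ i : ℤ, I₁ - Q ≤ i ∧ i ≤ I₂ + Q ∧ IsSyncWord X [x i]

/-- The higher block system `X^{⟨[a,b]⟩}` of `X`, over the alphabet of words. -/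
def higherBlock {A : Type*} (X : Set (ℤ → A)) (a b : ℤ) : Set (ℤ → List A) :=
  { y | ∃ x ∈ X, ∀ i : ℤ, y i = block x (i + a) (i + b) }

/-- The constant (fixed) point of the shift with value `α`. -/
def constPt {A : Type*} (α : A) : ℤ → A := fun _ => α

/-- `x` is left asymptotic to the fixed point `(α)_{i∈ℤ}`. -/
def LeftAsym {A : Type*} (x : ℤ → A) (α : A) : Prop := ∃ n : ℤ, ∀ i ≤ n, x i = α

/-- `x` is right asymptotic to the fixed point `(α)_{i∈ℤ}`. -/
def RightAsym {A : Type*} (x : ℤ → A) (α : A) : Prop := ∃ n : ℤ, ∀ i ≥ n, x i = α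

/-- `x` contains a synchronizing word of `X`. -/
def ContainsSync {A : Type*} (X : Set (ℤ → A)) (x : ℤ → A) : Prop :=
  ∃ a b : ℤ, a ≤ b ∧ IsSyncWord X (block x a b)

/-- `x` and `y` lie on the same shift orbit. -/
def SameOrbit {A : Type*} (x y : ℤ → A) : Prop := ∃ n : ℤ, ∀ i : ℤ, y i = x (i + n)

/-- Condition (a): `X` has a unique orbit containing all points left asymptotic to `α₋`,
right asymptotic to `α₊`, not containing a synchronizing word. -/
def CondA {A : Type*} (X : Set (ℤ → A)) (αm αp : A) : Prop :=
  (∃ x ∈ X, LeftAsym x αm ∧ RightAsym x αp ∧ ¬ ContainsSync X x) ∧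
  ∀ x ∈ X, ∀ y ∈ X,
    (LeftAsym x αm ∧ RightAsym x αp ∧ ¬ ContainsSync X x) →
    (LeftAsym y αm ∧ RightAsym y αp ∧ ¬ ContainsSync X y) → SameOrbit x y

/-- Condition (b): `X` has a point left asymptotic to `α₊`, right asymptotic to `α₋`,
containing a synchronizing word. -/
def CondB {A : Type*} (X : Set (ℤ → A)) (αm αp : A) : Prop :=
  ∃ x ∈ X, LeftAsym x αp ∧ RightAsym x αm ∧ ContainsSync X x

/-- Condition (c⁻). -/
def CondCminus {A : Type*} (X : Set (ℤ → A)) (αm : A) : Prop :=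
  ∃ K : ℕ, 0 < K ∧ ∀ x ∈ X, ∀ I₁ I₂ : ℤ, I₁ ≤ I₂ →
    RightAsym x αm → IsSyncWord X (block x I₁ I₂) →
    (∀ k : ℕ, 0 < k → ¬ IsSyncWord X (block x (I₂ + 1) (I₂ + k))) →
    ∃ i : ℤ, I₁ < i ∧ i ≤ I₂ + K ∧ ∀ j ≥ i, x j = αm

/-- Condition (c⁺), time symmetric to (c⁻). -/
def CondCplus {A : Type*} (X : Set (ℤ → A)) (αp : A) : Prop :=
  ∃ K : ℕ, 0 < K ∧ ∀ x ∈ X, ∀ I₁ I₂ : ℤ, I₁ ≤ I₂ →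
    LeftAsym x αp → IsSyncWord X (block x I₁ I₂) →
    (∀ k : ℕ, 0 < k → ¬ IsSyncWord X (block x (I₁ - k) (I₁ - 1))) →
    ∃ i : ℤ, I₁ - K ≤ i ∧ i < I₂ ∧ ∀ j ≤ i, x j = αp

/-- `((α₋), (α₊))` is a pair of fixed points of `X` satisfying (a), (b), (c⁻), (c⁺). -/
def CondsPair {A : Type*} (X : Set (ℤ → A)) (αm αp : A) : Prop :=
  constPt αm ∈ X ∧ constPt αp ∈ X ∧
    CondA X αm αp ∧ CondB X αm αp ∧ CondCminus X αm ∧ CondCplus X αp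

/-- `((α₋), (α₊))` is a characteristic pair of fixed points: the unique pair of fixed
points satisfying conditions (a), (b), (c⁻), (c⁺). -/
def CharPair {A : Type*} (X : Set (ℤ → A)) (αm αp : A) : Prop :=
  CondsPair X αm αp ∧ ∀ βm βp : A, CondsPair X βm βp → βm = αm ∧ βp = αp

/-- The set `𝒟(σ, α)`: admissible words `d` containing no synchronizing symbol, not ending
in `α`, such that `σ d α^k` is admissible for all `k`. -/
def Dset {A : Type*} (X : Set (ℤ → A)) (σ α : A) : Set (List A) :=
  { d | (∀ s ∈ d, ¬ IsSyncWord X [s]) ∧ d.getLast? ≠ some α ∧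
        ∀ k : ℕ, Admissible X (σ :: (d ++ List.replicate k α)) }


section Aux

variable {A : Type*}

lemma block_eq (x : ℤ → A) (a b : ℤ) :
    block x a b = (List.range (b + 1 - a).toNat).map (fun k : ℕ => x (a + (k : ℤ))) := by
  rw [block]
  simp only [bind_pure_comp, List.map_eq_map, List.map_map]; rfl

lemma block_length (x : ℤ → A) (a b : ℤ) : (block x a b).length = (b + 1 - a).toNat := by
  rw [block_eq, List.length_map, List.length_range]

lemma block_getElem (x : ℤ → A) (a b : ℤ) (k : ℕ) (h : k < (block x a b).length) :
    (block x a b)[k] = x (a + k) := by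
  simp only [block_eq, List.getElem_map, List.getElem_range]

lemma mem_block {x : ℤ → A} {a b : ℤ} {s : A} (h : s ∈ block x a b) :
    ∃ k : ℕ, (k : ℤ) < b + 1 - a ∧ s = x (a + k) := by
  rw [block_eq] at h
  obtain ⟨k, hk, rfl⟩ := List.mem_map.1 h
  rw [List.mem_range] at hk
  exact ⟨k, by omega, rfl⟩

lemma admissible_block {X : Set (ℤ → A)} {x : ℤ → A} (hx : x ∈ X) (a b : ℤ) :
    Admissible X (block x a b) :=
  ⟨x, hx, a, fun k h => by rw [List.get_eq_getElem, block_getElem]⟩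

lemma admissible_prefix {X : Set (ℤ → A)} {u w : List A} (h : Admissible X (u ++ w)) :
    Admissible X u := by
  obtain ⟨x, hx, n, hn⟩ := h
  refine ⟨x, hx, n, fun k hk => ?_⟩
  have hk' : k < (u ++ w).length := by simp; omega
  have := hn k hk'
  simpa [List.get_eq_getElem, List.getElem_append_left hk] using this

lemma sync_append {X : Set (ℤ → A)} {v w : List A} (hv : IsSyncWord X v)
    (h : Admissible X (v ++ w)) : IsSyncWord X (v ++ w) := by
  refine ⟨h, fun u z hu hz => ?_⟩
  have h1 : Admissible X (u ++ v) := admissible_prefix (by rwa [← List.append_assoc] at hu)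
  have h2 : Admissible X (v ++ (w ++ z)) := by rwa [← List.append_assoc]
  have h3 := hv.2 u (w ++ z) h1 h2
  simpa [List.append_assoc] using h3

lemma block_cons (x : ℤ → A) {a b : ℤ} (h : a ≤ b) :
    block x a b = x a :: block x (a + 1) b := by
  apply List.ext_getElem
  · simp only [block_length, List.length_cons]; omega
  · intro i h1 h2
    rcases i with _ | j
    · simp [block_getElem]
    · rw [block_getElem, List.getElem_cons_succ, block_getElem]
      congr 1
      push_cast
      ring

lemma shift_mem {X : Set (ℤ → A)} (hXs : shift '' X = X) (n : ℤ) {x : ℤ → A} (hx : x ∈ X) :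
    (fun i => x (i + n)) ∈ X := by
  have fwd : ∀ y ∈ X, shift y ∈ X := fun y hy => hXs ▸ Set.mem_image_of_mem shift hy
  have bwd : ∀ y ∈ X, (fun i => y (i - 1)) ∈ X := by
    intro y hy
    rw [← hXs] at hy
    obtain ⟨y', hy', hsy⟩ := hy
    have : y' = fun i => y (i - 1) := by
      funext i
      have : shift y' (i - 1) = y (i - 1) := by rw [hsy]
      simpa [shift] using this
    rwa [this] at hy'
  induction n using Int.induction_on with
  | zero => simpa using hx
  | succ k ih =>
      have := fwd _ ih
      have he : shift (fun i => x (i + k)) = fun i => x (i + (k + 1)) := by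
        funext i; simp [shift]; ring_nf
      rwa [he] at this
  | pred k ih =>
      have := bwd _ ih
      have he : (fun i => (fun j => x (j + (-k : ℤ))) (i - 1)) = fun i => x (i + (-k - 1)) := by
        funext i; ring_nf
      rwa [he] at this

lemma replicate_not_sync {X : Set (ℤ → A)} {αm αp : A} (h : CondA X αm αp) {k : ℕ} (hk : 0 < k) :
    ¬ IsSyncWord X (List.replicate k αm) := by
  intro hsync
  obtain ⟨⟨z, hz, ⟨n₀, hn₀⟩, _, hns⟩, _⟩ := h
  apply hns
  refine ⟨n₀ - k + 1, n₀, by omega, ?_⟩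
  have hbz : block z (n₀ - k + 1) n₀ = List.replicate k αm := by
    apply List.ext_getElem
    · rw [block_length, List.length_replicate]; omega
    · intro i h1 h2
      rw [block_getElem, List.getElem_replicate]
      apply hn₀
      rw [block_length] at h1
      omega
  rw [hbz]; exact hsync

lemma exists_limit [Fintype A] [TopologicalSpace A] [DiscreteTopology A]
    {X : Set (ℤ → A)} (hXc : IsClosed X) (hXs : shift '' X = X)
    (σ α : A) (d : List A)
    (hadm : ∀ k : ℕ, Admissible X (σ :: (d ++ List.replicate k α))) :
    ∃ y ∈ X, ∀ j : ℕ, y (j : ℤ) = (σ :: d).getD j α := by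
  set c : ℕ → A := fun j => (σ :: d).getD j α with hc
  have key : ∀ (m j : ℕ) (hj : j < (σ :: (d ++ List.replicate m α)).length),
      (σ :: (d ++ List.replicate m α)).get ⟨j, hj⟩ = c j := by
    intro m j hj
    rw [List.get_eq_getElem]
    have hrw : σ :: (d ++ List.replicate m α) = (σ :: d) ++ List.replicate m α := rfl
    simp only [hrw] at hj ⊢
    by_cases hcase : j < (σ :: d).length
    · rw [List.getElem_append_left hcase, hc]
      show (σ :: d)[j] = (σ :: d).getD j α
      rw [List.getD_eq_getElem _ _ hcase]
    · push_neg at hcase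
      rw [List.getElem_append_right hcase, List.getElem_replicate, hc]
      show α = (σ :: d).getD j α
      rw [List.getD_eq_default _ _ hcase]
  set V : ℕ → Set (ℤ → A) :=
    fun m => {y | y ∈ X ∧ ∀ j : ℕ, j ≤ d.length + m → y (j : ℤ) = c j} with hV
  have hdec : ∀ m, V (m + 1) ⊆ V m := fun m y hy => ⟨hy.1, fun j hj => hy.2 j (by omega)⟩
  have hne : ∀ m, (V m).Nonempty := by
    intro m
    obtain ⟨x, hx, n, hn⟩ := hadm m
    refine ⟨fun i => x (i + n), shift_mem hXs n hx, fun j hj => ?_⟩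
    have hjl : j < (σ :: (d ++ List.replicate m α)).length := by simp; omega
    have := hn j hjl
    rw [key m j hjl] at this
    rw [← this]; ring_nf
  have hcl : ∀ m, IsClosed (V m) := by
    intro m
    have hVm : V m = X ∩ ⋂ (j : ℕ), {y : ℤ → A | j ≤ d.length + m → y (j : ℤ) = c j} := by
      ext y; simp [hV, Set.mem_iInter]
    rw [hVm]
    refine hXc.inter (isClosed_iInter fun j => ?_)
    by_cases h : j ≤ d.length + m
    · simp only [h, forall_true_left]
      exact isClosed_eq (continuous_apply (j : ℤ)) continuous_const
    · simp only [h, false_implies]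
      exact isClosed_univ
  obtain ⟨y, hy⟩ := IsCompact.nonempty_iInter_of_sequence_nonempty_isCompact_isClosed V hdec hne
      ((hcl 0).isCompact) hcl
  simp only [Set.mem_iInter] at hy
  exact ⟨y, (hy 0).1, fun j => (hy j).2 j (by omega)⟩

end Aux

/-- Lemma 3.2: for a strongly synchronizing subshift with a characteristic pair of fixed
points, `Σ₋(X)` is nonempty and each `𝒟(σ₋, α₋)` is finite. -/
theorem stmt4 {A : Type*} [Fintype A]
    [TopologicalSpace A] [DiscreteTopology A]
    (X : Set (ℤ → A)) (hX : IsSubshift X) (hss : StronglySync X)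
    (αm αp : A) (hchar : CharPair X αm αp) :
    (∃ σ : A, IsSyncWord X [σ] ∧ (Dset X σ αm).Nonempty) ∧
    (∀ σ : A, IsSyncWord X [σ] → (Dset X σ αm).Finite) := by
  classical
  obtain ⟨hXne, hXc, hXs⟩ := hX
  obtain ⟨hsyncsub, Q, hQ⟩ := hss
  obtain ⟨⟨hαmX, hαpX, hA, hB, hCm, hCp⟩, _⟩ := hchar
  obtain ⟨K, hK, hCK⟩ := hCm
  have hrep : ∀ k : ℕ, 0 < k → ¬ IsSyncWord X (List.replicate k αm) :=
    fun k hk => replicate_not_sync hA hk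
  constructor
  · -- Part 1: Σ₋(X) is nonempty
    obtain ⟨x, hx, _hleft, ⟨n, hn⟩, a, b, hab, hsyncblk⟩ := hB
    obtain ⟨i, hi1, hi2, hisync⟩ := hQ x hx a b hab hsyncblk
    by_cases hF : ∃ j : ℤ, i < j ∧ x j ≠ αm
    · -- there is a non-αm symbol to the right of the sync symbol at i
      have hfin : {j : ℤ | i < j ∧ x j ≠ αm}.Finite := by
        apply Set.Finite.subset (Set.finite_Ioo i n)
        intro j hj
        refine ⟨hj.1, ?_⟩
        by_contra hc
        push_neg at hc
        exact hj.2 (hn j hc)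
      obtain ⟨m, hmS, hmax⟩ := Set.Finite.exists_maximalFor id _ hfin hF
      have hmle : ∀ j : ℤ, i < j → x j ≠ αm → j ≤ m := by
        intro j h1 h2
        by_contra hc
        push_neg at hc
        have := hmax (j := j) ⟨h1, h2⟩ hc.le
        simp only [id_eq] at this
        omega
      have him : i < m := hmS.1
      have htail : ∀ j : ℤ, m < j → x j = αm := by
        intro j hj
        by_contra hc
        have := hmle j (by omega) hc
        omega
      -- the largest sync symbol position in [i, m]
      have hTfin : {j : ℤ | i ≤ j ∧ j ≤ m ∧ IsSyncWord X [x j]}.Finite :=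
        Set.Finite.subset (Set.finite_Icc i m) (fun j hj => ⟨hj.1, hj.2.1⟩)
      obtain ⟨j₀, hj₀S, hj₀max⟩ := Set.Finite.exists_maximalFor id _ hTfin
        ⟨i, le_refl i, him.le, hisync⟩
      have hij₀ : i ≤ j₀ := hj₀S.1
      have hj₀m : j₀ ≤ m := hj₀S.2.1
      have hj₀le : ∀ j : ℤ, i ≤ j → j ≤ m → IsSyncWord X [x j] → j ≤ j₀ := by
        intro j h1 h2 h3
        by_contra hc
        push_neg at hc
        have := hj₀max (j := j) ⟨h1, h2, h3⟩ hc.le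
        simp only [id_eq] at this
        omega
      refine ⟨x j₀, hj₀S.2.2, block x (j₀ + 1) m, ?_, ?_, ?_⟩
      · -- no sync symbol in d
        intro s hs hssync
        obtain ⟨k, hk, rfl⟩ := mem_block hs
        have hp1 : j₀ < j₀ + 1 + (k : ℤ) := by omega
        have hp2 : j₀ + 1 + (k : ℤ) ≤ m := by omega
        have := hj₀le (j₀ + 1 + k) (by omega) hp2 hssync
        omega
      · -- d does not end in αm
        rcases eq_or_lt_of_le hj₀S.2.1 with heq | hlt
        · have : block x (j₀ + 1) m = [] := by
            apply List.length_eq_zero_iff.mp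
            rw [block_length]
            omega
          simp [this]
        · have hne' : block x (j₀ + 1) m ≠ [] := by
            intro hc
            have := congrArg List.length hc
            rw [block_length] at this
            simp at this
            omega
          rw [List.getLast?_eq_getLast hne']
          intro hc
          have hlast : (block x (j₀ + 1) m).getLast hne' = x m := by
            rw [List.getLast_eq_getElem, block_getElem]
            congr 1
            rw [block_length]
            omega
          rw [hlast] at hc
          exact hmS.2 (Option.some_injective _ hc)
      · -- σ d αm^k admissible for all k
        intro k
        refine ⟨x, hx, j₀, fun t ht => ?_⟩
        rw [List.get_eq_getElem]
        rcases t with _ | s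
        · simp
        · rw [List.getElem_cons_succ]
          have hs' : s < (block x (j₀ + 1) m ++ List.replicate k αm).length := by
            simpa using Nat.lt_of_succ_lt_succ (by simpa using ht)
          by_cases hcase : s < (block x (j₀ + 1) m).length
          · rw [List.getElem_append_left hcase, block_getElem]
            congr 1
            push_cast
            ring
          · push_neg at hcase
            rw [List.getElem_append_right hcase, List.getElem_replicate]
            apply htail
            rw [block_length] at hcase
            have : (s : ℤ) ≥ m - j₀ := by omega
            push_cast
            omega
    · -- x is constant αm to the right of i
      push_neg at hF
      refine ⟨x i, hisync, [], ?_, by simp, ?_⟩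
      · intro s hs; simp at hs
      · intro k
        refine ⟨x, hx, i, fun t ht => ?_⟩
        rw [List.get_eq_getElem]
        rcases t with _ | s
        · simp
        · rw [List.getElem_cons_succ]
          simp only [List.nil_append, List.getElem_replicate]
          apply hF
          omega
  · -- Part 2: each 𝒟(σ, αm) is finite
    intro σ hσ
    apply Set.Finite.subset (List.finite_length_le A (Q + K))
    intro d hd
    obtain ⟨hd1, hd2, hd3⟩ := hd
    simp only [Set.mem_setOf_eq]
    by_contra hlong
    push_neg at hlong
    have hL1 : 1 ≤ d.length := by omega
    obtain ⟨y, hy, hyj⟩ := exists_limit hXc hXs σ αm d hd3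
    have hy0 : y 0 = σ := by
      have := hyj 0
      simpa using this
    have hmemd : ∀ t : ℤ, 1 ≤ t → t ≤ (d.length : ℤ) → y t ∈ d := by
      intro t h1 h2
      have ht : t = ((t.toNat : ℕ) : ℤ) := by omega
      rw [ht, hyj t.toNat]
      have h3 : t.toNat - 1 < d.length := by omega
      have h4 : t.toNat = (t.toNat - 1) + 1 := by omega
      rw [h4, List.getD_cons_succ, List.getD_eq_getElem _ _ h3]
      exact List.getElem_mem h3
    have htail : ∀ t : ℤ, (d.length : ℤ) < t → y t = αm := by
      intro t h1
      have ht : t = ((t.toNat : ℕ) : ℤ) := by omega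
      rw [ht, hyj t.toNat]
      apply List.getD_eq_default
      simp only [List.length_cons]
      omega
    have hlast : y (d.length : ℤ) ≠ αm := by
      have h3 : d.length - 1 < d.length := by omega
      have h5 : (σ :: d).getD d.length αm = (σ :: d).getD ((d.length - 1) + 1) αm := by
        congr 1
        omega
      have hyL : y (d.length : ℤ) = d[d.length - 1] := by
        rw [hyj d.length, h5, List.getD_cons_succ, List.getD_eq_getElem _ _ h3]
      rw [hyL]
      intro hc
      apply hd2
      have hne' : d ≠ [] := by
        intro hc'
        simp [hc'] at hL1
      rw [List.getLast?_eq_getLast hne', List.getLast_eq_getElem]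
      rw [← hc]
    have hnosync : ∀ t : ℤ, 1 ≤ t → ¬ IsSyncWord X [y t] := by
      intro t h1 hsw
      by_cases hcase : t ≤ (d.length : ℤ)
      · exact hd1 (y t) (hmemd t h1 hcase) hsw
      · push_neg at hcase
        rw [htail t hcase] at hsw
        exact hrep 1 (by omega) (by simpa [List.replicate_one] using hsw)
    have hQ0 : (0 : ℤ) ≤ (Q : ℤ) := by omega
    have hbc : block y 0 (Q : ℤ) = y 0 :: block y 1 (Q : ℤ) := by
      have h := block_cons y hQ0
      norm_num at h
      exact h
    have hsyncblk : IsSyncWord X (block y 0 (Q : ℤ)) := by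
      rw [hbc]
      have hadm0 : Admissible X ([y 0] ++ block y 1 (Q : ℤ)) := by
        have : [y 0] ++ block y 1 (Q : ℤ) = block y 0 (Q : ℤ) := by rw [hbc]; rfl
        rw [this]
        exact admissible_block hy 0 (Q : ℤ)
      have hs0 : IsSyncWord X [y 0] := by rw [hy0]; exact hσ
      exact sync_append hs0 hadm0
    have hnostart : ∀ k : ℕ, 0 < k → ¬ IsSyncWord X (block y ((Q : ℤ) + 1) ((Q : ℤ) + k)) := by
      intro k hk hsw
      obtain ⟨i, hi1, hi2, hisw⟩ := hQ y hy ((Q : ℤ) + 1) ((Q : ℤ) + k) (by omega) hsw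
      exact hnosync i (by omega) hisw
    obtain ⟨i, hi0, hiQK, hitail⟩ := hCK y hy 0 (Q : ℤ) hQ0
      ⟨(d.length : ℤ) + 1, fun j hj => htail j (by omega)⟩ hsyncblk hnostart
    apply hlast
    apply hitail
    omega
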